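/- arXiv:1504.04149 — 2 statements merged into one kernel-verified Lean document; each statement's English description precedes it below -/
import Mathlib

section
/- Let $X:[0,\infty)\to\mathbb{R}$ be a continuous convex function with $X(0)=0$ and $0 \le \frac{X(t_2)-X(t_1)}{t_2-t_1} \le 1$ for all $0\le t_1 < t_2$. Then for every $v=(v_1,v_2)\in\mathbb{R}^2$ with $v_1 \ge v_2 \ge 0$ and $v\ne(0,0)$, there exists a unique $p\in[\max(v_1,v_2),\, v_1+v_2] = [v_1, v_1+v_2]$ such that $\frac{v_1}{p} + X\big(\frac{v_2}{p}\big) = 1$. -/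
/-- for a norm process path `X`, the equation `v₁/p + X (v₂/p) = 1`
has a unique solution `p ∈ [max v₁ v₂, v₁ + v₂] = [v₁, v₁+v₂]`. -/
theorem stmt1 (X : ℝ → ℝ)
    (hcont : ContinuousOn X (Set.Ici 0))
    (hconv : ConvexOn ℝ (Set.Ici 0) X)
    (h0 : X 0 = 0)
    (hslope : ∀ t₁ t₂ : ℝ, 0 ≤ t₁ → t₁ < t₂ →
      0 ≤ (X t₂ - X t₁) / (t₂ - t₁) ∧ (X t₂ - X t₁) / (t₂ - t₁) ≤ 1)
    (v₁ v₂ : ℝ) (h21 : v₂ ≤ v₁) (h2 : 0 ≤ v₂) (hne : ¬ (v₁ = 0 ∧ v₂ = 0)) :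
    ∃! p : ℝ, p ∈ Set.Icc (max v₁ v₂) (v₁ + v₂) ∧ v₁ / p + X (v₂ / p) = 1 := by
  -- v₁ > 0
  have hv1 : 0 < v₁ := by
    rcases lt_or_eq_of_le (h2.trans h21) with h | h
    · exact h
    · exact absurd ⟨h.symm, le_antisymm (h ▸ h21) h2⟩ hne
  have hmax : max v₁ v₂ = v₁ := max_eq_left h21
  -- X is monotone on [0,∞)
  have hmono : ∀ t₁ t₂ : ℝ, 0 ≤ t₁ → t₁ ≤ t₂ → X t₁ ≤ X t₂ := by
    intro t₁ t₂ h1 h12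
    rcases eq_or_lt_of_le h12 with rfl | hlt
    · exact le_rfl
    · have hsl := (hslope t₁ t₂ h1 hlt).1
      have hden : 0 < t₂ - t₁ := sub_pos.mpr hlt
      nlinarith [mul_nonneg hsl hden.le, div_mul_cancel₀ (X t₂ - X t₁) hden.ne']
  -- X t ≤ t and X t ≥ 0
  have hle : ∀ t : ℝ, 0 ≤ t → X t ≤ t := by
    intro t ht
    rcases eq_or_lt_of_le ht with rfl | hlt
    · simp [h0]
    · have := (hslope 0 t le_rfl hlt).2
      rw [h0] at this
      have := (div_le_one (by linarith : (0:ℝ) < t - 0)).mp this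
      linarith
  have hge : ∀ t : ℝ, 0 ≤ t → 0 ≤ X t := fun t ht => h0 ▸ hmono 0 t le_rfl ht
  set f : ℝ → ℝ := fun p => v₁ / p + X (v₂ / p) with hf
  -- strict antitone on positive reals
  have hanti : ∀ a b : ℝ, 0 < a → a < b → f b < f a := by
    intro a b ha hab
    have hb : 0 < b := ha.trans hab
    have h1 : v₁ / b < v₁ / a := div_lt_div_of_pos_left hv1 ha hab
    have h2' : X (v₂ / b) ≤ X (v₂ / a) := by
      apply hmono _ _ (div_nonneg h2 hb.le)
      exact div_le_div_of_nonneg_left h2 ha hab.le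
    simp only [hf]
    linarith
  have hs : 0 < v₁ + v₂ := by linarith
  -- endpoint values
  have hfa : 1 ≤ f v₁ := by
    simp only [hf]
    rw [div_self hv1.ne']
    have := hge (v₂ / v₁) (div_nonneg h2 hv1.le)
    linarith
  have hfb : f (v₁ + v₂) ≤ 1 := by
    simp only [hf]
    have := hle (v₂ / (v₁ + v₂)) (div_nonneg h2 hs.le)
    have : v₁ / (v₁ + v₂) + X (v₂ / (v₁ + v₂)) ≤ v₁ / (v₁ + v₂) + v₂ / (v₁ + v₂) := by linarith
    calc v₁ / (v₁ + v₂) + X (v₂ / (v₁ + v₂)) ≤ v₁ / (v₁ + v₂) + v₂ / (v₁ + v₂) := this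
      _ = 1 := by field_simp
  -- continuity on the interval
  have hcf : ContinuousOn f (Set.Icc v₁ (v₁ + v₂)) := by
    apply ContinuousOn.add
    · exact ContinuousOn.div continuousOn_const continuousOn_id
        (fun p hp => (lt_of_lt_of_le hv1 hp.1).ne')
    · apply hcont.comp (ContinuousOn.div continuousOn_const continuousOn_id
        (fun p hp => (lt_of_lt_of_le hv1 hp.1).ne'))
      intro p hp
      exact div_nonneg h2 (lt_of_lt_of_le hv1 hp.1).le
  have hab : v₁ ≤ v₁ + v₂ := by linarith
  have hIVT := intermediate_value_Icc' hab hcf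
  have h1mem : (1:ℝ) ∈ Set.Icc (f (v₁ + v₂)) (f v₁) := ⟨hfb, hfa⟩
  obtain ⟨p, hp, hfp⟩ := hIVT h1mem
  refine ⟨p, ⟨by rw [hmax]; exact hp, hfp⟩, ?_⟩
  rintro q ⟨hq, hfq⟩
  rw [hmax] at hq
  have hppos : 0 < p := lt_of_lt_of_le hv1 hp.1
  have hqpos : 0 < q := lt_of_lt_of_le hv1 hq.1
  have hfq' : f q = 1 := hfq
  by_contra hne'
  rcases lt_or_gt_of_ne hne' with h | h
  · have := hanti q p hqpos h
    rw [hfp, hfq'] at this; exact lt_irrefl 1 this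
  · have := hanti p q hppos h
    rw [hfp, hfq'] at this; exact lt_irrefl 1 this
end

section
/- Let $X:[0,\infty)\to\mathbb{R}$ be a continuous convex function with $X(0)=0$ and difference quotients in $[0,1]$, and let $p$ be defined on $\mathbb{R}^2_{+,\ge}$ as the unique solution in $[v_1,v_1+v_2]$ of $\frac{v_1}{p}+X(\frac{v_2}{p})=1$ (with $p(0)=0$). Then $p$ is subadditive: for all $v,w\in\mathbb{R}^2_{+,\ge}$, $p(v+w) \le p(v)+p(w)$. -/
/-- the function `p` induced on `ℝ²_{+,≥}` by a norm process path is
subadditive. -/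
theorem stmt4 (X : ℝ → ℝ)
    (hcont : ContinuousOn X (Set.Ici 0))
    (hconv : ConvexOn ℝ (Set.Ici 0) X)
    (h0 : X 0 = 0)
    (hslope : ∀ t₁ t₂ : ℝ, 0 ≤ t₁ → t₁ < t₂ →
      0 ≤ (X t₂ - X t₁) / (t₂ - t₁) ∧ (X t₂ - X t₁) / (t₂ - t₁) ≤ 1)
    (p : ℝ → ℝ → ℝ) (hp0 : p 0 0 = 0)
    (hp : ∀ v₁ v₂ : ℝ, v₂ ≤ v₁ → 0 ≤ v₂ → ¬ (v₁ = 0 ∧ v₂ = 0) →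
      p v₁ v₂ ∈ Set.Icc v₁ (v₁ + v₂) ∧ v₁ / p v₁ v₂ + X (v₂ / p v₁ v₂) = 1) :
    ∀ v₁ v₂ w₁ w₂ : ℝ, v₂ ≤ v₁ → 0 ≤ v₂ → w₂ ≤ w₁ → 0 ≤ w₂ →
      p (v₁ + w₁) (v₂ + w₂) ≤ p v₁ v₂ + p w₁ w₂ := by
  have hmono : ∀ t₁ t₂ : ℝ, 0 ≤ t₁ → t₁ ≤ t₂ → X t₁ ≤ X t₂ := by
    intro t₁ t₂ h1 h12
    rcases eq_or_lt_of_le h12 with h | h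
    · rw [h]
    · have hs := (hslope t₁ t₂ h1 h).1
      have h2 : (0:ℝ) < t₂ - t₁ := by linarith
      have := mul_nonneg hs h2.le
      rw [div_mul_cancel₀ _ (ne_of_gt h2)] at this
      linarith
  intro v₁ v₂ w₁ w₂ hv hv2 hw hw2
  have hv1 : (0:ℝ) ≤ v₁ := le_trans hv2 hv
  have hw1 : (0:ℝ) ≤ w₁ := le_trans hw2 hw
  rcases eq_or_lt_of_le hv1 with hv0 | hv0
  · have hv2' : v₂ = 0 := le_antisymm (by linarith) hv2
    rw [← hv0, hv2', zero_add, zero_add, hp0, zero_add]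
  rcases eq_or_lt_of_le hw1 with hw0 | hw0
  · have hw2' : w₂ = 0 := le_antisymm (by linarith) hw2
    rw [← hw0, hw2', add_zero, add_zero, hp0, add_zero]
  obtain ⟨⟨ha1, ha2⟩, hea⟩ := hp v₁ v₂ hv hv2 (by rintro ⟨h, -⟩; linarith)
  obtain ⟨⟨hb1, hb2⟩, heb⟩ := hp w₁ w₂ hw hw2 (by rintro ⟨h, -⟩; linarith)
  obtain ⟨⟨hq1, hq2⟩, heq⟩ := hp (v₁ + w₁) (v₂ + w₂) (by linarith) (by linarith)
    (by rintro ⟨h, -⟩; linarith)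
  set a := p v₁ v₂ with hadef
  set b := p w₁ w₂ with hbdef
  set q := p (v₁ + w₁) (v₂ + w₂) with hqdef
  have ha : (0:ℝ) < a := lt_of_lt_of_le hv0 ha1
  have hb : (0:ℝ) < b := lt_of_lt_of_le hw0 hb1
  by_contra hcon
  push_neg at hcon
  have hs : (0:ℝ) < a + b := by linarith
  have hq : (0:ℝ) < q := by linarith
  -- F(a+b) ≤ 1 via convexity
  have key : (v₁ + w₁) / (a + b) + X ((v₂ + w₂) / (a + b)) ≤ 1 := by
    have hx1 : (0:ℝ) ≤ v₂ / a := div_nonneg hv2 ha.le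
    have hx2 : (0:ℝ) ≤ w₂ / b := div_nonneg hw2 hb.le
    have hl1 : (0:ℝ) ≤ a / (a + b) := div_nonneg ha.le hs.le
    have hl2 : (0:ℝ) ≤ b / (a + b) := div_nonneg hb.le hs.le
    have hl : a / (a + b) + b / (a + b) = 1 := by field_simp
    have ha' : a ≠ 0 := ha.ne'
    have hb' : b ≠ 0 := hb.ne'
    have hs' : a + b ≠ 0 := hs.ne'
    have hcv := hconv.2 (Set.mem_Ici.mpr hx1) (Set.mem_Ici.mpr hx2) hl1 hl2 hl
    simp only [smul_eq_mul] at hcv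
    have harg : a / (a + b) * (v₂ / a) + b / (a + b) * (w₂ / b) = (v₂ + w₂) / (a + b) := by
      field_simp
    rw [harg] at hcv
    have hlin : (v₁ + w₁) / (a + b) = a / (a + b) * (v₁ / a) + b / (a + b) * (w₁ / b) := by
      field_simp
    have e1 : a / (a + b) * (v₁ / a + X (v₂ / a)) = a / (a + b) * 1 := by rw [hea]
    have e2 : b / (a + b) * (w₁ / b + X (w₂ / b)) = b / (a + b) * 1 := by rw [heb]
    nlinarith [hcv, hlin, e1, e2, hl]
  have h1 : (v₁ + w₁) / q < (v₁ + w₁) / (a + b) :=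
    div_lt_div_of_pos_left (by linarith) hs hcon
  have h2 : X ((v₂ + w₂) / q) ≤ X ((v₂ + w₂) / (a + b)) := by
    apply hmono _ _ (div_nonneg (by linarith) hq.le)
    apply div_le_div_of_nonneg_left (by linarith) hs hcon.le
  linarith [heq, key, h1, h2]
end
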